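/- arXiv:2104.07339 — 5 statements merged into one kernel-verified Lean document; each statement's English description precedes it below -/
import Mathlib

section
/- Let G be a group, H ≤ G a subgroup, and g₀, g₁, …, g_s ∈ G. Define g(n) = g₀^{C(n,0)} · g₁^{C(n,1)} ⋯ g_s^{C(n,s)} where C(n,i) is the binomial coefficient. Then g(n) ∈ H for all integers n ≥ 0 if and only if g₀, g₁, …, g_s ∈ H. -/
/-- For a polynomial sequence `g(n) = g₀^{C(n,0)} ⋯ g_s^{C(n,s)}` in a group `G`,
the sequence takes values in a subgroup `H` iff all coefficients `g₀, …, g_s` lie in `H`. -/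
theorem stmt0 {G : Type*} [Group G] (H : Subgroup G) (s : ℕ) (g : ℕ → G) :
    (∀ n : ℕ, ((List.range (s + 1)).map (fun i => g i ^ n.choose i)).prod ∈ H) ↔
      (∀ i ≤ s, g i ∈ H) := by
  constructor
  · intro h i hi
    induction i using Nat.strong_induction_on with
    | _ i ih =>
      have hi' := h i
      have hsplit : s + 1 = (i + 1) + (s - i) := by omega
      rw [hsplit, List.range_add, List.map_append, List.prod_append, List.map_map] at hi'
      have htail :
          ((List.range (s - i)).map ((fun j => g j ^ i.choose j) ∘ (fun x => i + 1 + x))).prod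
            = 1 := by
        apply List.prod_eq_one
        intro x hx
        simp only [List.mem_map] at hx
        obtain ⟨j, hj, rfl⟩ := hx
        simp [Nat.choose_eq_zero_of_lt (by omega : i < i + 1 + j)]
      rw [htail, mul_one, List.range_succ, List.map_append, List.prod_append] at hi'
      simp only [List.map_singleton, List.prod_singleton, Nat.choose_self, pow_one] at hi'
      have hpre : ((List.range i).map (fun j => g j ^ i.choose j)).prod ∈ H := by
        apply list_prod_mem
        intro x hx
        simp only [List.mem_map, List.mem_range] at hx
        obtain ⟨j, hj, rfl⟩ := hx
        exact H.pow_mem (ih j hj (by omega)) _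
      have := H.mul_mem (H.inv_mem hpre) hi'
      rwa [inv_mul_cancel_left] at this
  · intro h n
    apply list_prod_mem
    intro x hx
    simp only [List.mem_map, List.mem_range] at hx
    obtain ⟨j, hj, rfl⟩ := hx
    exact H.pow_mem (h j (by omega)) _
end

section
/- Let P₁, …, P_t be distinct nonzero integral polynomials with P_i(0)=0, and suppose that a₀ x^d + a₁ (x+P₁(y))^d + … + a_t (x+P_t(y))^d = 0 as a polynomial identity in ℝ[x,y], where d ≥ t and a₀, …, a_t ∈ ℝ. Then a₀ = a₁ = … = a_t = 0. In other words, a homogeneous polynomial progression of length t+1 satisfies no nontrivial homogeneous algebraic relation of degree ≥ t, so its algebraic complexity is at most t−1. -/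
open Polynomial

/-- A homogeneous polynomial progression of length `t+1` satisfies no nontrivial
homogeneous algebraic relation of degree `d ≥ t`. Here `ℝ[x,y]` is modelled as
`Polynomial (Polynomial ℝ)`, with `X` the variable `x` and coefficients polynomials in `y`. -/
theorem stmt2 (t : ℕ) (ht : 0 < t) (P : Fin t → Polynomial ℝ)
    (hint : ∀ i, (∀ n : ℤ, ∃ m : ℤ, (P i).eval (n : ℝ) = m) ∧ (P i).eval 0 = 0)
    (hne : ∀ i, P i ≠ 0) (hinj : Function.Injective P)
    (d : ℕ) (hd : t ≤ d) (a : Fin (t + 1) → ℝ)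
    (hrel : (C (C (a 0)) * X ^ d : Polynomial (Polynomial ℝ)) +
      ∑ i : Fin t, C (C (a i.succ)) * (X + C (P i)) ^ d = 0) :
    ∀ i, a i = 0 := by
  classical
  -- choose a point y₀ avoiding all roots of the Pᵢ and of their differences
  set S : Fin t × Fin t → Set ℝ := fun p =>
    if p.1 = p.2 then (∅ : Set ℝ) else {y | (P p.1 - P p.2).IsRoot y} with hS
  have hSfin : ∀ p, (S p).Finite := by
    intro p
    simp only [hS]
    split
    · exact Set.finite_empty
    · exact Polynomial.finite_setOf_isRoot (sub_ne_zero.mpr fun h => ‹¬_› (hinj h))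
  have hBfin : ((⋃ i, {y : ℝ | (P i).IsRoot y}) ∪ ⋃ p, S p).Finite :=
    (Set.finite_iUnion fun i => Polynomial.finite_setOf_isRoot (hne i)).union
      (Set.finite_iUnion hSfin)
  obtain ⟨y₀, hy₀⟩ := hBfin.infinite_compl.nonempty
  simp only [Set.mem_compl_iff, Set.mem_union, Set.mem_iUnion, not_or, not_exists] at hy₀
  obtain ⟨hy₁, hy₂⟩ := hy₀
  set c : Fin t → ℝ := fun i => (P i).eval y₀ with hc
  have hc0 : ∀ i, c i ≠ 0 := fun i h => hy₁ i h
  have hcinj : Function.Injective c := by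
    intro i j h
    by_contra hij
    have := hy₂ (i, j)
    simp only [hS, if_neg hij] at this
    exact this (by simp [hc, Polynomial.IsRoot, h] at h ⊢; linarith [h])
  -- specialize the relation at y = y₀
  have hg : (C (a 0) * X ^ d : Polynomial ℝ) +
      ∑ i : Fin t, C (a i.succ) * (X + C (c i)) ^ d = 0 := by
    have := congrArg (Polynomial.map (Polynomial.evalRingHom y₀)) hrel
    simpa [Polynomial.map_add, Polynomial.map_mul, Polynomial.map_pow, Polynomial.map_C,
      Polynomial.map_X, Polynomial.map_sum, hc] using this
  -- extract coefficient equations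
  have hsum : ∀ k : ℕ, 1 ≤ k → k ≤ d → ∑ i : Fin t, a i.succ * c i ^ k = 0 := by
    intro k hk1 hkd
    have h := congrArg (fun p => Polynomial.coeff p (d - k)) hg
    have hne' : d - k ≠ d := by omega
    simp only [Polynomial.coeff_add, Polynomial.finset_sum_coeff, Polynomial.coeff_C_mul,
      Polynomial.coeff_X_pow, if_neg hne', mul_zero, zero_add, Polynomial.coeff_X_add_C_pow,
      Polynomial.coeff_zero, Nat.sub_sub_self hkd] at h
    have hN : ((d.choose (d - k) : ℝ)) ≠ 0 := by
      exact_mod_cast (Nat.choose_pos (Nat.sub_le d k)).ne'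
    have h' : (∑ i : Fin t, a i.succ * c i ^ k) * (d.choose (d - k) : ℝ) = 0 := by
      rw [Finset.sum_mul]
      rw [← h]
      exact Finset.sum_congr rfl fun i _ => by ring
    exact (mul_eq_zero.mp h').resolve_right hN
  -- Vandermonde argument
  set v : Fin t → ℝ := fun i => a i.succ with hv
  set M : Matrix (Fin t) (Fin t) ℝ := Matrix.of fun k i : Fin t => c i ^ ((k : ℕ) + 1) with hM
  have hMv : M.mulVec v = 0 := by
    funext k
    have := hsum ((k : ℕ) + 1) (Nat.succ_le_succ (Nat.zero_le _))
      (le_trans (Nat.succ_le_of_lt k.isLt) hd)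
    simpa [Matrix.mulVec, dotProduct, hM, hv, mul_comm] using this
  have hMdet : M.det ≠ 0 := by
    have hMeq : M = (Matrix.diagonal c * Matrix.vandermonde c).transpose := by
      ext k i
      simp [hM, Matrix.transpose_apply, Matrix.diagonal_mul, Matrix.vandermonde, pow_succ,
        mul_comm]
    rw [hMeq, Matrix.det_transpose, Matrix.det_mul, Matrix.det_diagonal]
    exact mul_ne_zero (Finset.prod_ne_zero_iff.mpr fun i _ => hc0 i)
      (Matrix.det_vandermonde_ne_zero_iff.mpr hcinj)
  have hv0 : v = 0 := Matrix.eq_zero_of_mulVec_eq_zero hMdet hMv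
  have hsucc : ∀ i : Fin t, a i.succ = 0 := fun i => congrFun hv0 i
  -- the first coefficient
  have h0 : a 0 = 0 := by
    have h := congrArg (fun p => Polynomial.coeff p d) hg
    simp only [Polynomial.coeff_add, Polynomial.finset_sum_coeff, Polynomial.coeff_C_mul,
      Polynomial.coeff_X_pow, if_pos rfl, mul_one, Polynomial.coeff_X_add_C_pow,
      Polynomial.coeff_zero, Nat.sub_self, pow_zero, Nat.choose_self] at h
    simpa [hsucc] using h
  intro i
  refine Fin.cases h0 (fun j => hsucc j) i
end

section
/- Let P₁, …, P_t be distinct integral polynomials and suppose the progression (x, x+P₁(y), …, x+P_t(y)) satisfies an algebraic relation of the form a₀ binom(x,t) + a₁ binom(x+P₁(y),t) + … + a_t binom(x+P_t(y),t) = 0 with a₀,…,a_t ∈ ℝ. Then, for every 1 ≤ k ≤ t, one has a₁ binom(P₁(y),k) + … + a_t binom(P_t(y),k) = 0 as polynomials in y. -/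
open Polynomial

/-- The binomial coefficient polynomial `binom(u,k) = u(u-1)⋯(u-k+1)/k!` in `ℝ[u]`. -/
noncomputable def binomPoly (k : ℕ) : Polynomial ℝ :=
  ((k.factorial : ℝ)⁻¹) • descPochhammer ℝ k

lemma aeval_binomPoly {A : Type*} [CommRing A] [Algebra ℝ A] (x : A) (k : ℕ) :
    aeval x (binomPoly k) = (k.factorial : ℝ)⁻¹ • (descPochhammer ℤ k).smeval x := by
  rw [binomPoly, map_smul, ← descPochhammer_map (algebraMap ℤ ℝ) k,
    aeval_map_algebraMap, aeval_eq_smeval]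

lemma binomPoly_aeval_add {A : Type*} [CommRing A] [Algebra ℝ A] (r s : A) (t : ℕ) :
    aeval (r + s) (binomPoly t) =
      ∑ ij ∈ Finset.HasAntidiagonal.antidiagonal t, aeval r (binomPoly ij.1) * aeval s (binomPoly ij.2) := by
  simp only [aeval_binomPoly]
  rw [Ring.descPochhammer_smeval_add t (Commute.all r s), Finset.smul_sum]
  refine Finset.sum_congr rfl fun ij hij => ?_
  have hij' : ij.1 + ij.2 = t := Finset.HasAntidiagonal.mem_antidiagonal.mp hij
  have hcast : ((t.choose ij.1 : ℕ) : A) = ((t.choose ij.1 : ℝ)) • (1 : A) := by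
    rw [Algebra.smul_def, mul_one, map_natCast]
  rw [hcast, smul_mul_assoc, one_mul, smul_smul, smul_mul_assoc, mul_smul_comm, smul_smul]
  congr 1
  have h1 : (ij.1.factorial : ℝ) ≠ 0 := Nat.cast_ne_zero.mpr (Nat.factorial_ne_zero _)
  have h2 : (ij.2.factorial : ℝ) ≠ 0 := Nat.cast_ne_zero.mpr (Nat.factorial_ne_zero _)
  have h3 : (t.factorial : ℝ) ≠ 0 := Nat.cast_ne_zero.mpr (Nat.factorial_ne_zero _)
  field_simp
  have := Nat.choose_mul_factorial_mul_factorial (hij' ▸ Nat.le_add_right ij.1 ij.2) (n := t)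
  have h4 : t - ij.1 = ij.2 := by omega
  rw [h4] at this
  push_cast [← this]
  ring

lemma binomPoly_coeff_eq_zero {m k : ℕ} (h : m < k) : (binomPoly m).coeff k = 0 := by
  rw [binomPoly, coeff_smul]
  rw [coeff_eq_zero_of_natDegree_lt (by rw [descPochhammer_natDegree]; exact h), smul_zero]

lemma binomPoly_coeff_self (m : ℕ) : (binomPoly m).coeff m = (m.factorial : ℝ)⁻¹ := by
  rw [binomPoly, coeff_smul]
  have h := monic_descPochhammer ℝ m
  have : (descPochhammer ℝ m).coeff m = 1 := by
    have := h.leadingCoeff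
    rwa [leadingCoeff, descPochhammer_natDegree] at this
  rw [this, smul_eq_mul, mul_one]

lemma tri (n : ℕ) (d : ℕ → Polynomial ℝ)
    (h : ∑ m ∈ Finset.range (n + 1),
      C (d m) * (binomPoly m).map (algebraMap ℝ (Polynomial ℝ)) = 0) :
    ∀ m ≤ n, d m = 0 := by
  induction n with
  | zero =>
    intro m hm
    interval_cases m
    have h0 := congrArg (fun p => p.coeff 0) h
    simp only [zero_add, Finset.sum_range_one, coeff_zero, coeff_C_mul, coeff_map] at h0
    rw [binomPoly_coeff_self] at h0
    simpa using h0
  | succ n ih =>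
    have hlast : d (n + 1) = 0 := by
      have h0 := congrArg (fun p => p.coeff (n + 1)) h
      simp only [finset_sum_coeff, coeff_C_mul, coeff_map, coeff_zero] at h0
      rw [Finset.sum_range_succ] at h0
      have hz : ∀ m ∈ Finset.range (n + 1),
          d m * (algebraMap ℝ (Polynomial ℝ)) ((binomPoly m).coeff (n + 1)) = 0 := by
        intro m hm
        rw [binomPoly_coeff_eq_zero (Finset.mem_range.mp hm), map_zero, mul_zero]
      rw [Finset.sum_eq_zero hz, zero_add, binomPoly_coeff_self] at h0
      have hne : (algebraMap ℝ (Polynomial ℝ)) (((n+1).factorial : ℝ)⁻¹) ≠ 0 := by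
        simp [Nat.factorial_ne_zero]
      exact (mul_eq_zero.mp h0).resolve_right hne
    intro m hm
    rcases Nat.lt_or_ge m (n + 1) with hlt | hge
    · refine ih ?_ m (by omega)
      rw [Finset.sum_range_succ, hlast, map_zero, zero_mul, add_zero] at h
      exact h
    · have : m = n + 1 := by omega
      rw [this]; exact hlast

lemma hB_lem (m : ℕ) : aeval (X : Polynomial (Polynomial ℝ)) (binomPoly m)
    = (binomPoly m).map (algebraMap ℝ (Polynomial ℝ)) := by
  conv_rhs => rw [← aeval_X_left_apply ((binomPoly m).map (algebraMap ℝ (Polynomial ℝ)))]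
  rw [aeval_map_algebraMap]

noncomputable def CAlg : Polynomial ℝ →ₐ[ℝ] Polynomial (Polynomial ℝ) :=
  { Polynomial.C with commutes' := fun r => rfl }

lemma hC_lem (p : Polynomial ℝ) (m : ℕ) :
    aeval (C p : Polynomial (Polynomial ℝ)) (binomPoly m) = C (aeval p (binomPoly m)) := by
  exact aeval_algHom_apply CAlg p (binomPoly m)


/-- If `a₀ binom(x,t) + ∑ᵢ aᵢ binom(x+Pᵢ(y),t) = 0`, then for every `1 ≤ k ≤ t`,
`∑ᵢ aᵢ binom(Pᵢ(y),k) = 0` as polynomials in `y`. -/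
theorem stmt8 (t : ℕ) (ht : 0 < t) (P : Fin t → Polynomial ℝ)
    (hint : ∀ i, (∀ n : ℤ, ∃ m : ℤ, (P i).eval (n : ℝ) = m) ∧ (P i).eval 0 = 0)
    (hinj : Function.Injective P) (a : Fin (t + 1) → ℝ)
    (hrel : a 0 • aeval (X : Polynomial (Polynomial ℝ)) (binomPoly t) +
      ∑ i : Fin t, a i.succ • aeval ((X : Polynomial (Polynomial ℝ)) + C (P i))
        (binomPoly t) = 0) :
    ∀ k : ℕ, 1 ≤ k → k ≤ t →
      ∑ i : Fin t, a i.succ • aeval (P i) (binomPoly k) = 0 := by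
  intro k hk1 hkt
  classical
  set q : Fin t → ℕ → Polynomial ℝ := fun i k => aeval (P i) (binomPoly k) with hq
  set d : ℕ → Polynomial ℝ := fun m =>
    (if m = t then Polynomial.C (a 0) else 0) + ∑ i : Fin t, a i.succ • q i (t - m) with hd
  have key : ∀ i : Fin t, ∑ m ∈ Finset.range (t + 1),
      C (q i (t - m)) * (binomPoly m).map (algebraMap ℝ (Polynomial ℝ))
      = aeval ((X : Polynomial (Polynomial ℝ)) + C (P i)) (binomPoly t) := by
    intro i
    rw [binomPoly_aeval_add, Finset.Nat.sum_antidiagonal_eq_sum_range_succ_mk]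
    refine (Finset.sum_congr rfl fun m hm => ?_).symm
    rw [hB_lem, hC_lem, mul_comm]
  have hsum : ∑ m ∈ Finset.range (t + 1),
      C (d m) * (binomPoly m).map (algebraMap ℝ (Polynomial ℝ)) = 0 := by
    have expand : ∑ m ∈ Finset.range (t + 1),
        C (d m) * (binomPoly m).map (algebraMap ℝ (Polynomial ℝ))
        = a 0 • aeval (X : Polynomial (Polynomial ℝ)) (binomPoly t) +
          ∑ i : Fin t, a i.succ • aeval ((X : Polynomial (Polynomial ℝ)) + C (P i))
            (binomPoly t) := by
      have hsmul : ∀ (r : ℝ) (p : Polynomial (Polynomial ℝ)), r • p = C (C r) * p := by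
        intro r p
        rw [Algebra.smul_def]
        congr 1
      simp only [hd, map_add, add_mul, Finset.sum_add_distrib]
      congr 1
      · rw [hB_lem]
        simp only [apply_ite C, map_zero, ite_mul, zero_mul]
        rw [Finset.sum_ite_eq' (Finset.range (t + 1)) t]
        rw [if_pos (Finset.self_mem_range_succ t), hsmul]
      · calc ∑ m ∈ Finset.range (t + 1), C (∑ i : Fin t, a i.succ • q i (t - m)) *
              (binomPoly m).map (algebraMap ℝ (Polynomial ℝ))
            = ∑ m ∈ Finset.range (t + 1), ∑ i : Fin t, a i.succ •
              (C (q i (t - m)) * (binomPoly m).map (algebraMap ℝ (Polynomial ℝ))) := by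
              refine Finset.sum_congr rfl fun m _ => ?_
              rw [map_sum, Finset.sum_mul]
              refine Finset.sum_congr rfl fun i _ => ?_
              rw [show (C (a i.succ • q i (t - m)) : Polynomial (Polynomial ℝ))
                  = a i.succ • C (q i (t - m)) from map_smul CAlg _ _, smul_mul_assoc]
          _ = ∑ i : Fin t, ∑ m ∈ Finset.range (t + 1), a i.succ •
              (C (q i (t - m)) * (binomPoly m).map (algebraMap ℝ (Polynomial ℝ))) :=
              Finset.sum_comm
          _ = ∑ i : Fin t, a i.succ • aeval ((X : Polynomial (Polynomial ℝ)) + C (P i))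
              (binomPoly t) := by
              refine Finset.sum_congr rfl fun i _ => ?_
              rw [← key i, Finset.smul_sum]
    rw [expand]; exact hrel
  have htri := tri t d hsum (t - k) (Nat.sub_le _ _)
  have h1 : (t - k) ≠ t := by omega
  have h2 : t - (t - k) = k := by omega
  rw [hd] at htri
  simp only [if_neg h1, h2, zero_add] at htri
  exact htri
end

section
/- Fix k ∈ ℕ₊ and an integral polynomial progression P⃗(x,y) = (x, x+P₁(y), …, x+P_t(y)). Define 𝒫 = Span_ℝ{ P⃗^k(x,y) : x,y ∈ ℝ } ⊆ ℝ^{t+1}, where P⃗^k(x,y) = (x^k, (x+P₁(y))^k, …, (x+P_t(y))^k). Then 𝒫 equals Span_ℝ{ P⃗^j(x,y) : x,y ∈ ℝ, 1 ≤ j ≤ k }, and also equals Span_ℝ{ (binom(x,k), binom(x+P₁(y),k), …, binom(x+P_t(y),k)) : x,y ∈ ℝ }. -/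
open Polynomial

lemma sum_pow_eval_zero {N : ℕ} (c : ℕ → ℝ)
    (h : ∀ x : ℝ, ∑ m ∈ Finset.range N, c m * x ^ m = 0) :
    ∀ m < N, c m = 0 := by
  intro m hm
  have hp : (∑ m ∈ Finset.range N, C (c m) * X ^ m : ℝ[X]) = 0 := by
    apply Polynomial.funext
    intro r
    simp only [eval_finset_sum, eval_mul, eval_C, eval_pow, eval_X, eval_zero]
    exact h r
  have := congrArg (fun p : ℝ[X] => p.coeff m) hp
  simpa [Polynomial.finset_sum_coeff, Polynomial.coeff_C_mul, Polynomial.coeff_X_pow,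
    Finset.mem_range.mpr hm] using this

lemma coeff_mem_of_sum_mem {n N : ℕ} (W : Submodule ℝ (Fin n → ℝ)) (w : ℕ → Fin n → ℝ)
    (h : ∀ x : ℝ, (∑ m ∈ Finset.range N, x ^ m • w m) ∈ W) :
    ∀ m < N, w m ∈ W := by
  obtain ⟨W', hc⟩ := Submodule.exists_isCompl W
  set g : (Fin n → ℝ) →ₗ[ℝ] W' := Submodule.projectionOnto W' W hc.symm with hg
  intro m hm
  have hzero : ∀ i : Fin n, ((g (w m) : Fin n → ℝ)) i = 0 := by
    intro i
    refine sum_pow_eval_zero (fun m' => (g (w m') : Fin n → ℝ) i) (fun x => ?_) m hm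
    have h0 : g (∑ m ∈ Finset.range N, x ^ m • w m) = 0 :=
      Submodule.projectionOnto_apply_of_mem_right hc.symm (h x)
    have : (g (∑ m ∈ Finset.range N, x ^ m • w m) : Fin n → ℝ) i = 0 := by
      rw [h0]; rfl
    rw [map_sum] at this
    simpa [mul_comm] using this
  have : g (w m) = 0 := by
    ext i
    exact hzero i
  exact (Submodule.projectionOnto_apply_eq_zero_iff hc.symm).mp this

lemma binomPoly_coeff (n : ℕ) : (binomPoly n).coeff n = (n.factorial : ℝ)⁻¹ := by
  rw [binomPoly, Polynomial.coeff_smul]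
  have : (descPochhammer ℝ n).coeff n = 1 := by
    have h1 := monic_descPochhammer ℝ n
    have h2 := descPochhammer_natDegree (R := ℝ) n
    simpa [Polynomial.Monic, Polynomial.leadingCoeff, h2] using h1
  simp [this]

lemma binomPoly_degree (n : ℕ) : (binomPoly n).degree ≤ n := by
  refine le_trans (Polynomial.degree_smul_le _ _) ?_
  have h1 := monic_descPochhammer ℝ n
  have h2 := descPochhammer_natDegree (R := ℝ) n
  rw [Polynomial.degree_eq_natDegree h1.ne_zero, h2]

lemma binomPoly_pascal (j : ℕ) (u : ℝ) :
    (binomPoly j).eval u = (binomPoly (j + 1)).eval (u + 1) - (binomPoly (j + 1)).eval u := by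
  have h1 : (descPochhammer ℝ (j + 1)).eval (u + 1) = (u + 1) * (descPochhammer ℝ j).eval u := by
    rw [descPochhammer_succ_left]
    simp [Polynomial.eval_comp]
  have h2 : (descPochhammer ℝ (j + 1)).eval u = (descPochhammer ℝ j).eval u * (u - j) :=
    descPochhammer_succ_eval j u
  have hfac : ((j.factorial : ℝ)) ≠ 0 := Nat.cast_ne_zero.mpr j.factorial_ne_zero
  have hfac1 : (((j + 1).factorial : ℝ)) ≠ 0 := Nat.cast_ne_zero.mpr (j + 1).factorial_ne_zero
  simp only [binomPoly, Polynomial.eval_smul, smul_eq_mul, h1, h2]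
  rw [Nat.factorial_succ]
  push_cast
  field_simp
  ring

lemma mem_span_binomPoly : ∀ (n : ℕ) (p : ℝ[X]), p.degree < (n : WithBot ℕ) →
    p ∈ Submodule.span ℝ (binomPoly '' Set.Iio n) := by
  intro n
  induction n with
  | zero =>
    intro p hp
    have : p = 0 := by
      rwa [Nat.cast_zero, Nat.WithBot.lt_zero_iff, Polynomial.degree_eq_bot] at hp
    simp [this]
  | succ n ih =>
    intro p hp
    set c : ℝ := p.coeff n with hc
    set q : ℝ[X] := p - (c * n.factorial) • binomPoly n with hq
    have hfac : ((n.factorial : ℝ)) ≠ 0 := Nat.cast_ne_zero.mpr n.factorial_ne_zero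
    have hqdeg : q.degree < (n : WithBot ℕ) := by
      rw [Polynomial.degree_lt_iff_coeff_zero]
      intro m hm
      rcases eq_or_lt_of_le hm with hmn | hmn
      · rw [hq, Polynomial.coeff_sub, Polynomial.coeff_smul]
        rw [show m = n from by exact_mod_cast hmn.symm]
        rw [binomPoly_coeff]
        field_simp
        rw [smul_eq_mul, hc, mul_one_div, mul_div_assoc, div_self hfac, mul_one, sub_self]
      · have hpm : p.coeff m = 0 := by
          apply Polynomial.coeff_eq_zero_of_degree_lt
          refine lt_of_lt_of_le hp ?_
          exact_mod_cast Nat.succ_le_of_lt hmn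
        have hbm : (binomPoly n).coeff m = 0 := by
          apply Polynomial.coeff_eq_zero_of_degree_lt
          exact lt_of_le_of_lt (binomPoly_degree n) (by exact_mod_cast hmn)
        rw [hq, Polynomial.coeff_sub, Polynomial.coeff_smul, hpm, hbm]
        simp
    have hqmem : q ∈ Submodule.span ℝ (binomPoly '' Set.Iio (n + 1)) := by
      refine Submodule.span_mono (Set.image_mono ?_) (ih q hqdeg)
      exact Set.Iio_subset_Iio (Nat.le_succ n)
    have hbmem : binomPoly n ∈ Submodule.span ℝ (binomPoly '' Set.Iio (n + 1)) :=
      Submodule.subset_span ⟨n, Nat.lt_succ_self n, rfl⟩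
    have : p = q + (c * n.factorial) • binomPoly n := by rw [hq]; ring
    rw [this]
    exact Submodule.add_mem _ hqmem (Submodule.smul_mem _ _ hbmem)
/-- Equivalent descriptions of the spaces `𝒫_k`: the span of the coordinatewise
`k`-th powers of the progression vector equals the span of all `j`-th powers for `1 ≤ j ≤ k`,
and also equals the span of the coordinatewise binomial vectors of degree `k`. -/
theorem stmt9 (t k : ℕ) (hk : 1 ≤ k) (P : Fin t → Polynomial ℝ)
    (hint : ∀ i, (∀ n : ℤ, ∃ m : ℤ, (P i).eval (n : ℝ) = m) ∧ (P i).eval 0 = 0)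
    (hinj : Function.Injective P) :
    (Submodule.span ℝ {v : Fin (t + 1) → ℝ | ∃ x y : ℝ,
        v = fun i => (x + Fin.cases (0 : ℝ) (fun j => (P j).eval y) i) ^ k} =
      Submodule.span ℝ {v : Fin (t + 1) → ℝ | ∃ x y : ℝ, ∃ j : ℕ, 1 ≤ j ∧ j ≤ k ∧
        v = fun i => (x + Fin.cases (0 : ℝ) (fun j' => (P j').eval y) i) ^ j}) ∧
    (Submodule.span ℝ {v : Fin (t + 1) → ℝ | ∃ x y : ℝ,
        v = fun i => (x + Fin.cases (0 : ℝ) (fun j => (P j).eval y) i) ^ k} =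
      Submodule.span ℝ {v : Fin (t + 1) → ℝ | ∃ x y : ℝ,
        v = fun i => (binomPoly k).eval (x + Fin.cases (0 : ℝ) (fun j => (P j).eval y) i)}) := by
  classical
  set c : ℝ → Fin (t + 1) → ℝ := fun y => Fin.cases (0 : ℝ) (fun j => (P j).eval y) with hc
  set Pk : Submodule ℝ (Fin (t + 1) → ℝ) := Submodule.span ℝ {v : Fin (t + 1) → ℝ | ∃ x y : ℝ,
        v = fun i => (x + Fin.cases (0 : ℝ) (fun j => (P j).eval y) i) ^ k} with hP
  -- key: all power vectors of degree j ≤ k lie in Pk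
  have key : ∀ (x y : ℝ) (j : ℕ), j ≤ k →
      (fun i : Fin (t + 1) => (x + c y i) ^ j) ∈ Pk := by
    intro x y j hj
    have hmem : ∀ h : ℝ, (∑ m ∈ Finset.range (k + 1),
        h ^ m • fun i : Fin (t + 1) => (x + c y i) ^ (k - m) * (k.choose m : ℝ)) ∈ Pk := by
      intro h
      refine Submodule.subset_span ⟨x + h, y, ?_⟩
      funext i
      show (∑ m ∈ Finset.range (k + 1),
          h ^ m • fun i : Fin (t + 1) => (x + c y i) ^ (k - m) * (k.choose m : ℝ)) i
        = ((x + h) + c y i) ^ k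
      rw [Finset.sum_apply]
      simp only [Pi.smul_apply, smul_eq_mul]
      rw [show (x + h) + c y i = h + (x + c y i) from by ring, add_pow]
      exact Finset.sum_congr rfl fun m _ => by ring
    have hw := coeff_mem_of_sum_mem Pk _ hmem (k - j) (by omega)
    have hch : (k.choose (k - j) : ℝ) ≠ 0 :=
      Nat.cast_ne_zero.mpr (Nat.choose_pos (Nat.sub_le k j)).ne'
    have : (fun i : Fin (t + 1) => (x + c y i) ^ j) =
        (k.choose (k - j) : ℝ)⁻¹ • fun i : Fin (t + 1) =>
          (x + c y i) ^ (k - (k - j)) * (k.choose (k - j) : ℝ) := by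
      funext i
      simp only [Pi.smul_apply, smul_eq_mul, Nat.sub_sub_self hj]
      rw [mul_comm ((x + c y i) ^ j) _, ← mul_assoc, inv_mul_cancel₀ hch, one_mul]
    rw [this]
    exact Submodule.smul_mem _ _ hw
  constructor
  · apply le_antisymm
    · apply Submodule.span_mono
      rintro v ⟨x, y, rfl⟩
      exact ⟨x, y, k, hk, le_rfl, rfl⟩
    · rw [Submodule.span_le]
      rintro v ⟨x, y, j, _, hj2, rfl⟩
      exact key x y j hj2
  · set B : Submodule ℝ (Fin (t + 1) → ℝ) := Submodule.span ℝ {v : Fin (t + 1) → ℝ | ∃ x y : ℝ,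
        v = fun i => (binomPoly k).eval (x + Fin.cases (0 : ℝ) (fun j => (P j).eval y) i)} with hB
    -- binomial vectors of all degrees j ≤ k lie in B
    have step : ∀ (d j : ℕ) (x y : ℝ), j + d = k →
        (fun i : Fin (t + 1) => (binomPoly j).eval (x + c y i)) ∈ B := by
      intro d
      induction d with
      | zero =>
        intro j x y hj
        have : j = k := by omega
        subst this
        exact Submodule.subset_span ⟨x, y, rfl⟩
      | succ d ih =>
        intro j x y hj
        have h1 := ih (j + 1) (x + 1) y (by omega)
        have h2 := ih (j + 1) x y (by omega)
        have heq : (fun i : Fin (t + 1) => (binomPoly j).eval (x + c y i)) =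
            (fun i : Fin (t + 1) => (binomPoly (j + 1)).eval ((x + 1) + c y i)) -
            (fun i : Fin (t + 1) => (binomPoly (j + 1)).eval (x + c y i)) := by
          funext i
          simp only [Pi.sub_apply]
          rw [binomPoly_pascal j (x + c y i), show (x + 1) + c y i = (x + c y i) + 1 from by ring]
        rw [heq]
        exact sub_mem h1 h2
    apply le_antisymm
    · rw [Submodule.span_le]
      rintro v ⟨x, y, rfl⟩
      set L : ℝ[X] →ₗ[ℝ] (Fin (t + 1) → ℝ) :=
        LinearMap.pi (fun i => Polynomial.leval (x + c y i)) with hL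
      have hXk : (X : ℝ[X]) ^ k ∈ Submodule.span ℝ (binomPoly '' Set.Iio (k + 1)) := by
        apply mem_span_binomPoly
        rw [Polynomial.degree_X_pow]
        exact_mod_cast Nat.lt_succ_self k
      have hmap : Submodule.map L (Submodule.span ℝ (binomPoly '' Set.Iio (k + 1))) ≤ B := by
        rw [Submodule.map_span, Submodule.span_le]
        rintro v ⟨p, ⟨j, hj, rfl⟩, rfl⟩
        have hj' : j < k + 1 := hj
        have : L (binomPoly j) = fun i : Fin (t + 1) => (binomPoly j).eval (x + c y i) := rfl
        rw [this]
        exact step (k - j) j x y (by omega)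
      have : (fun i : Fin (t + 1) => (x + c y i) ^ k) = L ((X : ℝ[X]) ^ k) := by
        funext i
        show _ = Polynomial.eval (x + c y i) ((X : ℝ[X]) ^ k)
        simp
      rw [this]
      exact hmap ⟨(X : ℝ[X]) ^ k, hXk, rfl⟩
    · rw [Submodule.span_le]
      rintro v ⟨x, y, rfl⟩
      set L : ℝ[X] →ₗ[ℝ] (Fin (t + 1) → ℝ) :=
        LinearMap.pi (fun i => Polynomial.leval (x + c y i)) with hL
      have hbk : binomPoly k ∈ Polynomial.degreeLE ℝ (k : WithBot ℕ) :=
        Polynomial.mem_degreeLE.mpr (binomPoly_degree k)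
      rw [Polynomial.degreeLE_eq_span_X_pow] at hbk
      have hmap : Submodule.map L (Submodule.span ℝ
          ((((Finset.range (k + 1)).image fun n => (X : ℝ[X]) ^ n) : Finset ℝ[X]) : Set ℝ[X])) ≤ Pk := by
        rw [Submodule.map_span, Submodule.span_le]
        rintro v ⟨p, hp, rfl⟩
        simp only [Finset.coe_image, Set.mem_image, Finset.mem_coe, Finset.mem_range] at hp
        obtain ⟨j, hj, rfl⟩ := hp
        have hj' : j < k + 1 := hj
        have : L ((X : ℝ[X]) ^ j) = fun i : Fin (t + 1) => (x + c y i) ^ j := by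
          funext i
          show Polynomial.eval (x + c y i) ((X : ℝ[X]) ^ j) = _
          simp
        rw [this]
        exact key x y j (by omega)
      have : (fun i : Fin (t + 1) => (binomPoly k).eval (x + c y i)) = L (binomPoly k) := rfl
      rw [this]
      exact hmap ⟨binomPoly k, hbk, rfl⟩
end

section
/- Let P₁, …, P_t be distinct integral polynomials, let (Q₀,…,Q_t) be an algebraic relation satisfied by (x, x+P₁(y), …, x+P_t(y)) with Qᵢ(u) = Σ_{k=1}^{s} b_{ik} binom(u,k), and suppose deg Q₀ = s with b_{0s} ≠ 0. Let b ∈ ℝ be irrational, let α ∈ ℝ be irrational, and define functions on (ℝ/ℤ)^s by f_i(a₁,…,a_s) = e(α(b_{i1}a₁ + … + b_{is}a_s)) where e(x) = exp(2πix). Then for the standard Weyl transformation T(a₁,…,a_s) = (a₁+a₀, a₂+a₁, …, a_s+a_{s−1}) with any a₀, one has f₀(T^x a)·f₁(T^{x+P₁(y)} a) ⋯ f_t(T^{x+P_t(y)} a) = 1 for all integers x, y and all a ∈ (ℝ/ℤ)^s. -/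
open Polynomial

/-- The standard Weyl transformation, lifted to the universal cover: the coordinate `a 0` is
the translation parameter `a₀`, and `(T a)_m = a_m + a_{m−1}` for `m ≥ 1`. -/
def weylFwd (a : ℕ → ℝ) : ℕ → ℝ :=
  fun m => match m with
  | 0 => a 0
  | m + 1 => a (m + 1) + a m

/-- The inverse of the Weyl transformation. -/
def weylInv (a : ℕ → ℝ) : ℕ → ℝ
  | 0 => a 0
  | m + 1 => a (m + 1) - weylInv a m

/-- The Weyl transformation as a bijection, so that integer powers `T^x` make sense. -/
def weylEquiv : Equiv.Perm (ℕ → ℝ) where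
  toFun := weylFwd
  invFun := weylInv
  left_inv := by
    intro a; funext m
    induction m with
    | zero => rfl
    | succ m ih =>
      simp only [weylInv, weylFwd, ih]
      ring
  right_inv := by
    intro a; funext m
    induction m with
    | zero => rfl
    | succ m ih =>
      simp only [weylFwd, weylInv]
      ring

/-! ### Auxiliary lemmas -/

section Aux

lemma binomPoly_zero' : binomPoly 0 = 1 := by
  simp [binomPoly, descPochhammer_zero]

lemma binomPoly_eval_zero {j : ℕ} (hj : j ≠ 0) : (binomPoly j).eval 0 = 0 := by
  have h : (descPochhammer ℝ j).eval 0 = 0 := descPochhammer_ne_zero_eval_zero (R := ℝ) hj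
  simp [binomPoly, h]

/-- Pascal's identity for the binomial polynomials, at the level of real evaluations. -/
lemma binomPoly_pascal_s16 (k : ℕ) (x : ℝ) :
    (binomPoly (k + 1)).eval (x + 1) =
      (binomPoly (k + 1)).eval x + (binomPoly k).eval x := by
  simp only [binomPoly, eval_smul, smul_eq_mul]
  have h1 : (descPochhammer ℝ (k + 1)).eval (x + 1) =
      (x + 1) * (descPochhammer ℝ k).eval x := by
    rw [descPochhammer_succ_left]
    simp [eval_comp]
  have h2 : (descPochhammer ℝ (k + 1)).eval x =
      (descPochhammer ℝ k).eval x * (x - k) := descPochhammer_succ_eval k x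
  rw [h1, h2]
  have hfac : (Nat.factorial (k + 1) : ℝ) = (k + 1) * Nat.factorial k := by
    rw [Nat.factorial_succ]; push_cast; ring
  have hk : (Nat.factorial k : ℝ) ≠ 0 := Nat.cast_ne_zero.2 k.factorial_ne_zero
  have hk1 : ((k : ℝ) + 1) ≠ 0 := by positivity
  rw [hfac]
  field_simp
  ring

/-- The forward difference operator on real polynomials. -/
noncomputable def fd (p : Polynomial ℝ) : Polynomial ℝ :=
  aeval ((X : Polynomial ℝ) + 1) p - p

lemma fd_eval (p : Polynomial ℝ) (r : ℝ) :
    (fd p).eval r = p.eval (r + 1) - p.eval r := by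
  have : (aeval ((X : Polynomial ℝ) + 1) p) = p.comp (X + 1) := (comp_eq_aeval).symm
  simp [fd, this, eval_comp]

lemma fd_binomPoly_succ (k : ℕ) : fd (binomPoly (k + 1)) = binomPoly k := by
  apply Polynomial.funext
  intro r
  rw [fd_eval, binomPoly_pascal_s16]
  ring

lemma fd_one : fd 1 = 0 := by simp [fd]

lemma fd_zero : fd 0 = 0 := by simp [fd]

lemma fd_C_mul (c : ℝ) (p : Polynomial ℝ) : fd (C c * p) = C c * fd p := by
  simp [fd, mul_sub]

lemma fd_iter_C_mul (m : ℕ) (c : ℝ) (p : Polynomial ℝ) :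
    fd^[m] (C c * p) = C c * fd^[m] p := by
  induction m generalizing p with
  | zero => simp
  | succ m ih => rw [Function.iterate_succ_apply, Function.iterate_succ_apply, fd_C_mul, ih]

lemma fd_sum {ι : Type*} (S : Finset ι) (g : ι → Polynomial ℝ) :
    fd (∑ i ∈ S, g i) = ∑ i ∈ S, fd (g i) := by
  simp [fd, map_sum, Finset.sum_sub_distrib]

lemma fd_iter_sum {ι : Type*} (m : ℕ) (S : Finset ι) (g : ι → Polynomial ℝ) :
    fd^[m] (∑ i ∈ S, g i) = ∑ i ∈ S, fd^[m] (g i) := by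
  induction m generalizing g with
  | zero => simp
  | succ m ih => rw [Function.iterate_succ_apply, fd_sum, ih]; simp [Function.iterate_succ_apply]

lemma fd_iter_zero (m : ℕ) : fd^[m] (0 : Polynomial ℝ) = 0 := by
  induction m with
  | zero => rfl
  | succ m ih => rw [Function.iterate_succ_apply, fd_zero, ih]

lemma fd_iter_binomPoly (m j : ℕ) :
    fd^[m] (binomPoly j) = if m ≤ j then binomPoly (j - m) else 0 := by
  induction m generalizing j with
  | zero => simp
  | succ m ih =>
    rw [Function.iterate_succ_apply]
    cases j with
    | zero =>
      rw [binomPoly_zero', fd_one, fd_iter_zero, if_neg (by omega)]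
    | succ j =>
      rw [fd_binomPoly_succ, ih]
      by_cases h : m ≤ j
      · rw [if_pos h, if_pos (by omega)]
        congr 1
        omega
      · rw [if_neg h, if_neg (by omega)]

/-- Commutation of the forward difference with the substitution `x ↦ x + c` in
`(ℝ[y])[x]`. -/
lemma fd_aeval_comm (c : Polynomial ℝ) (q : Polynomial ℝ) :
    aeval ((X : Polynomial (Polynomial ℝ)) + 1) (aeval ((X : Polynomial (Polynomial ℝ)) + C c) q)
      - aeval ((X : Polynomial (Polynomial ℝ)) + C c) q
    = aeval ((X : Polynomial (Polynomial ℝ)) + C c) (fd q) := by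
  set A := Polynomial (Polynomial ℝ)
  have h1 : aeval ((X : A) + 1) (aeval ((X : A) + C c) q) =
      aeval ((X : A) + C c + 1) q := by
    have := Polynomial.aeval_algHom_apply
      ((Polynomial.aeval ((X : A) + 1)).restrictScalars ℝ) ((X : A) + C c) q
    simp only [AlgHom.coe_restrictScalars', map_add, aeval_X, aeval_C] at this
    rw [Polynomial.algebraMap_eq] at this
    rw [show (X : A) + C c + 1 = (X : A) + 1 + C c by ring]
    exact this.symm
  have h2 : aeval ((X : A) + C c) (aeval ((X : Polynomial ℝ) + 1) q) =
      aeval ((X : A) + C c + 1) q := by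
    have := Polynomial.aeval_algHom_apply
      (Polynomial.aeval ((X : A) + C c)) ((X : Polynomial ℝ) + 1) q
    simp only [map_add, aeval_X, map_one] at this
    rw [← this]
  rw [fd, map_sub, h1, h2]

/-- Reindexing `Icc 1 s` sums as `range s` sums. -/
lemma sum_Icc_one_eq_sum_range {M : Type*} [AddCommMonoid M] (f : ℕ → M) (s : ℕ) :
    ∑ k ∈ Finset.Icc 1 s, f k = ∑ k ∈ Finset.range s, f (k + 1) := by
  induction s with
  | zero => simp
  | succ n ih =>
    rw [Finset.sum_range_succ, ← ih, Finset.sum_Icc_succ_top (by omega)]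

/-- The coordinate formula for integer powers of the Weyl transformation. -/
noncomputable def Wfun (x : ℤ) (a : ℕ → ℝ) : ℕ → ℝ :=
  fun m => ∑ j ∈ Finset.range (m + 1), (binomPoly j).eval (x : ℝ) * a (m - j)

lemma Wfun_zero (a : ℕ → ℝ) : Wfun 0 a = a := by
  funext m
  rw [Wfun]
  rw [Finset.sum_eq_single 0]
  · simp [binomPoly_zero']
  · intro j hj hj0
    push_cast
    rw [binomPoly_eval_zero hj0, zero_mul]
  · intro h
    exact absurd (Finset.mem_range.2 (Nat.succ_pos m)) h

lemma weylFwd_Wfun (x : ℤ) (a : ℕ → ℝ) : weylFwd (Wfun x a) = Wfun (x + 1) a := by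
  funext m
  cases m with
  | zero =>
    show Wfun x a 0 = Wfun (x + 1) a 0
    simp [Wfun, binomPoly_zero']
  | succ m =>
    show Wfun x a (m + 1) + Wfun x a m = Wfun (x + 1) a (m + 1)
    rw [Wfun, Wfun, Wfun]
    have hcast : ((x + 1 : ℤ) : ℝ) = (x : ℝ) + 1 := by push_cast; ring
    rw [hcast]
    rw [Finset.sum_range_succ' (fun j => (binomPoly j).eval ((x : ℝ) + 1) * a (m + 1 - j)) (m + 1)]
    rw [Finset.sum_range_succ' (fun j => (binomPoly j).eval (x : ℝ) * a (m + 1 - j)) (m + 1)]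
    simp only [binomPoly_zero', eval_one, one_mul, Nat.sub_zero]
    have hterm : ∀ j ∈ Finset.range (m + 1),
        (binomPoly (j + 1)).eval ((x : ℝ) + 1) * a (m + 1 - (j + 1)) =
        (binomPoly (j + 1)).eval (x : ℝ) * a (m - j) +
          (binomPoly j).eval (x : ℝ) * a (m - j) := by
      intro j _
      have : m + 1 - (j + 1) = m - j := by omega
      rw [this, binomPoly_pascal_s16]
      ring
    have h4 : ∀ j ∈ Finset.range (m + 1),
        (binomPoly (j + 1)).eval (x : ℝ) * a (m + 1 - (j + 1)) =
        (binomPoly (j + 1)).eval (x : ℝ) * a (m - j) := by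
      intro j _
      rw [show m + 1 - (j + 1) = m - j from by omega]
    rw [Finset.sum_congr rfl hterm, Finset.sum_add_distrib, Finset.sum_congr rfl h4]
    ring

lemma weyl_zpow (x : ℤ) (a : ℕ → ℝ) : (weylEquiv ^ x) a = Wfun x a := by
  induction x using Int.induction_on with
  | zero => simp [Wfun_zero]
  | succ n ih =>
    have hsplit : (weylEquiv ^ ((n : ℤ) + 1)) a = weylEquiv ((weylEquiv ^ (n : ℤ)) a) := by
      rw [show ((n : ℤ) + 1) = 1 + (n : ℤ) by ring, zpow_add, zpow_one, Equiv.Perm.mul_apply]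
    rw [hsplit, ih]
    show weylFwd (Wfun (n : ℤ) a) = Wfun ((n : ℤ) + 1) a
    exact weylFwd_Wfun _ _
  | pred n ih =>
    have h1 : (-(n : ℤ) - 1) + 1 = -(n : ℤ) := by ring
    have h2 : weylEquiv (Wfun (-(n : ℤ) - 1) a) = Wfun (-(n : ℤ)) a := by
      show weylFwd (Wfun (-(n : ℤ) - 1) a) = Wfun (-(n : ℤ)) a
      rw [weylFwd_Wfun, h1]
    have h4 : (weylEquiv ^ (-(n : ℤ) - 1)) a = weylEquiv⁻¹ ((weylEquiv ^ (-(n : ℤ))) a) := by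
      rw [show (-(n : ℤ) - 1) = (-1) + (-(n : ℤ)) by ring, zpow_add, Equiv.Perm.mul_apply,
        zpow_neg_one]
    rw [h4, ih, ← h2]
    simp

end Aux

/-- Given an algebraic relation `(Q₀, …, Q_t)` for the progression
`(x, x+P₁(y), …, x+P_t(y))` with `Qᵢ(u) = ∑_{k=1}^s b_{ik} binom(u,k)`, `deg Q₀ = s` and
`b_{0s} ≠ 0`, the functions `fᵢ(a) = e(α(b_{i1}a₁ + … + b_{is}a_s))` satisfy
`f₀(T^x a)·∏ᵢ fᵢ(T^{x+Pᵢ(y)} a) = 1` for all integers `x, y` and all points `a`, where `T`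
is the standard Weyl transformation (with arbitrary translation parameter `a 0`). -/
theorem stmt16 (t : ℕ) (ht : 0 < t) (s : ℕ) (hs : 0 < s)
    (P : Fin t → Polynomial ℝ)
    (hint : ∀ i, (∀ n : ℤ, ∃ m : ℤ, (P i).eval (n : ℝ) = m) ∧ (P i).eval 0 = 0)
    (hinj : Function.Injective P)
    (Pz : Fin t → ℤ → ℤ) (hPz : ∀ i y, (P i).eval ((y : ℤ) : ℝ) = ((Pz i y : ℤ) : ℝ))
    (b : Fin (t + 1) → ℕ → ℝ) (Q : Fin (t + 1) → Polynomial ℝ)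
    (hQ : ∀ i, Q i = ∑ k ∈ Finset.range s, C (b i (k + 1)) * binomPoly (k + 1))
    (hrel : aeval (X : Polynomial (Polynomial ℝ)) (Q 0) +
      ∑ i : Fin t, aeval ((X : Polynomial (Polynomial ℝ)) + C (P i)) (Q i.succ) = 0)
    (hdeg : (Q 0).natDegree = s) (hb0s : b 0 s ≠ 0)
    (b₀ : ℝ) (hb₀ : Irrational b₀) (α : ℝ) (hα : Irrational α)
    (f : Fin (t + 1) → (ℕ → ℝ) → ℂ)
    (hf : ∀ i a, f i a = Complex.exp (2 * Real.pi * Complex.I *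
      (α * ∑ k ∈ Finset.Icc 1 s, b i k * a k))) :
    ∀ (x y : ℤ) (a : ℕ → ℝ),
      f 0 ((weylEquiv ^ x) a) *
        ∏ i : Fin t, f i.succ ((weylEquiv ^ (x + Pz i y)) a) = 1 := by
  intro x y a
  classical
  set A := Polynomial (Polynomial ℝ) with hA
  set PP : Fin (t + 1) → Polynomial ℝ := Fin.cases 0 P with hPP
  set n : Fin (t + 1) → ℤ := Fin.cases x (fun i => x + Pz i y) with hn
  set ν : Fin (t + 1) → ℝ := fun i => (x : ℝ) + (PP i).eval (y : ℝ) with hν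
  have hν0 : ∀ i, ((n i : ℤ) : ℝ) = ν i := by
    intro i
    induction i using Fin.cases with
    | zero => simp [hν, hPP, hn]
    | succ i =>
      simp only [hν, hPP, hn, Fin.cases_succ, hPz]
      push_cast
      ring
  -- the relation, uniformly indexed
  have hrel0 : ∑ i : Fin (t + 1), aeval ((X : A) + C (PP i)) (Q i) = 0 := by
    rw [Fin.sum_univ_succ]
    simpa [hPP] using hrel
  -- iterated forward differences of the relation
  have hrelm : ∀ m : ℕ, ∑ i : Fin (t + 1), aeval ((X : A) + C (PP i)) (fd^[m] (Q i)) = 0 := by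
    intro m
    induction m with
    | zero => simpa using hrel0
    | succ m ih =>
      have h := congrArg (fun p : A => aeval ((X : A) + 1) p - p) ih
      simp only [map_zero, sub_zero, map_sum] at h
      rw [← Finset.sum_sub_distrib] at h
      calc ∑ i : Fin (t + 1), aeval ((X : A) + C (PP i)) (fd^[m + 1] (Q i))
          = ∑ i : Fin (t + 1),
              (aeval ((X : A) + 1) (aeval ((X : A) + C (PP i)) (fd^[m] (Q i)))
                - aeval ((X : A) + C (PP i)) (fd^[m] (Q i))) := by
            refine Finset.sum_congr rfl fun i _ => ?_
            rw [Function.iterate_succ_apply', fd_aeval_comm]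
        _ = 0 := h
  -- evaluation of the relation at (x, y)
  have heval : ∀ m : ℕ, ∑ i : Fin (t + 1), (fd^[m] (Q i)).eval (ν i) = 0 := by
    intro m
    set ψ : A →ₐ[ℝ] ℝ :=
      Polynomial.aevalTower (Polynomial.aeval (y : ℝ) : Polynomial ℝ →ₐ[ℝ] ℝ) (x : ℝ) with hψ
    have h := congrArg ψ (hrelm m)
    simp only [map_zero, map_sum] at h
    rw [← h]
    refine Finset.sum_congr rfl fun i _ => ?_
    have h1 : ψ ((X : A) + C (PP i)) = ν i := by
      rw [map_add, hψ, Polynomial.aevalTower_X, Polynomial.aevalTower_C, hν]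
      rw [Polynomial.coe_aeval_eq_eval]
    rw [← Polynomial.aeval_algHom_apply ψ ((X : A) + C (PP i)) (fd^[m] (Q i)), h1,
      Polynomial.coe_aeval_eq_eval]
  -- eval of the forward differences of Q i
  have hexp : ∀ (m : ℕ) (i : Fin (t + 1)) (r : ℝ),
      (fd^[m] (Q i)).eval r =
        ∑ k ∈ Finset.range s, b i (k + 1) *
          (if m ≤ k + 1 then (binomPoly (k + 1 - m)).eval r else 0) := by
    intro m i r
    rw [hQ i, fd_iter_sum, eval_finset_sum]
    refine Finset.sum_congr rfl fun k _ => ?_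
    rw [fd_iter_C_mul, fd_iter_binomPoly, eval_mul, eval_C]
    by_cases h : m ≤ k + 1
    · rw [if_pos h, if_pos h]
    · rw [if_neg h, if_neg h, eval_zero]
  -- rewrite each exponent sum via the coordinate formula
  have hk : ∀ (i : Fin (t + 1)) (k : ℕ), k ∈ Finset.Icc 1 s →
      b i k * ((weylEquiv ^ (n i)) a) k =
      ∑ m ∈ Finset.range (s + 1),
        (if m ≤ k then b i k * ((binomPoly (k - m)).eval (ν i) * a m) else 0) := by
    intro i k hkmem
    obtain ⟨hk1, hks⟩ := Finset.mem_Icc.mp hkmem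
    have hW : ((weylEquiv ^ (n i)) a) k =
        ∑ j ∈ Finset.range (k + 1), (binomPoly j).eval (ν i) * a (k - j) := by
      rw [weyl_zpow]
      simp only [Wfun, hν0 i]
    have hrefl : ∑ j ∈ Finset.range (k + 1), (binomPoly j).eval (ν i) * a (k - j)
        = ∑ m ∈ Finset.range (k + 1), (binomPoly (k - m)).eval (ν i) * a m := by
      rw [← Finset.sum_range_reflect (fun m => (binomPoly (k - m)).eval (ν i) * a m) (k + 1)]
      refine Finset.sum_congr rfl fun j hj => ?_
      have hj' : j ≤ k := by
        have := Finset.mem_range.mp hj; omega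
      rw [show k + 1 - 1 - j = k - j from by omega, show k - (k - j) = j from by omega]
    have hext : ∑ m ∈ Finset.range (k + 1),
          (if m ≤ k then b i k * ((binomPoly (k - m)).eval (ν i) * a m) else 0)
        = ∑ m ∈ Finset.range (s + 1),
          (if m ≤ k then b i k * ((binomPoly (k - m)).eval (ν i) * a m) else 0) := by
      refine Finset.sum_subset (Finset.range_subset_range.mpr (by omega)) ?_
      intro m _ hm
      have : ¬ m ≤ k := fun hle => hm (Finset.mem_range.mpr (by omega))
      rw [if_neg this]
    rw [hW, hrefl, Finset.mul_sum, ← hext]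
    refine Finset.sum_congr rfl fun m hm => ?_
    have hmk : m ≤ k := by
      have := Finset.mem_range.mp hm; omega
    rw [if_pos hmk]
  -- the total exponent vanishes
  have hsum : ∑ i : Fin (t + 1), ∑ k ∈ Finset.Icc 1 s,
      b i k * ((weylEquiv ^ (n i)) a) k = 0 := by
    have step1 : ∀ i : Fin (t + 1),
        ∑ k ∈ Finset.Icc 1 s, b i k * ((weylEquiv ^ (n i)) a) k
        = ∑ m ∈ Finset.range (s + 1), ∑ k ∈ Finset.Icc 1 s,
            (if m ≤ k then b i k * ((binomPoly (k - m)).eval (ν i) * a m) else 0) := by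
      intro i
      rw [Finset.sum_congr rfl (hk i), Finset.sum_comm]
    have step2 : ∀ (m : ℕ) (i : Fin (t + 1)),
        ∑ k ∈ Finset.Icc 1 s,
            (if m ≤ k then b i k * ((binomPoly (k - m)).eval (ν i) * a m) else 0)
        = (fd^[m] (Q i)).eval (ν i) * a m := by
      intro m i
      rw [hexp m i (ν i), Finset.sum_mul, sum_Icc_one_eq_sum_range]
      refine Finset.sum_congr rfl fun k _ => ?_
      by_cases h : m ≤ k + 1
      · rw [if_pos h, if_pos h]
        ring
      · rw [if_neg h, if_neg h]
        ring
    calc ∑ i : Fin (t + 1), ∑ k ∈ Finset.Icc 1 s, b i k * ((weylEquiv ^ (n i)) a) k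
        = ∑ i : Fin (t + 1), ∑ m ∈ Finset.range (s + 1), ∑ k ∈ Finset.Icc 1 s,
            (if m ≤ k then b i k * ((binomPoly (k - m)).eval (ν i) * a m) else 0) :=
          Finset.sum_congr rfl fun i _ => step1 i
      _ = ∑ m ∈ Finset.range (s + 1), ∑ i : Fin (t + 1), ∑ k ∈ Finset.Icc 1 s,
            (if m ≤ k then b i k * ((binomPoly (k - m)).eval (ν i) * a m) else 0) :=
          Finset.sum_comm
      _ = ∑ m ∈ Finset.range (s + 1), ∑ i : Fin (t + 1), (fd^[m] (Q i)).eval (ν i) * a m := by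
          refine Finset.sum_congr rfl fun m _ => Finset.sum_congr rfl fun i _ => step2 m i
      _ = ∑ m ∈ Finset.range (s + 1), (∑ i : Fin (t + 1), (fd^[m] (Q i)).eval (ν i)) * a m := by
          refine Finset.sum_congr rfl fun m _ => ?_
          rw [Finset.sum_mul]
      _ = 0 := by
          refine Finset.sum_eq_zero fun m _ => ?_
          rw [heval m, zero_mul]
  -- assemble the product of exponentials
  have key : ∀ i : Fin (t + 1),
      f i ((weylEquiv ^ (n i)) a) = Complex.exp (2 * Real.pi * Complex.I * α *
        ((∑ k ∈ Finset.Icc 1 s, b i k * ((weylEquiv ^ (n i)) a) k : ℝ) : ℂ)) := by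
    intro i
    rw [hf]
    congr 1
    push_cast
    ring
  calc f 0 ((weylEquiv ^ x) a) * ∏ i : Fin t, f i.succ ((weylEquiv ^ (x + Pz i y)) a)
      = ∏ i : Fin (t + 1), f i ((weylEquiv ^ (n i)) a) := by
        rw [Fin.prod_univ_succ]
        have h0 : n 0 = x := by simp [hn]
        have hsucc : ∀ i : Fin t, n i.succ = x + Pz i y := fun i => by simp [hn]
        rw [h0]
        exact congrArg _ (Finset.prod_congr rfl fun i _ => by rw [hsucc i])
    _ = ∏ i : Fin (t + 1), Complex.exp (2 * Real.pi * Complex.I * α *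
          ((∑ k ∈ Finset.Icc 1 s, b i k * ((weylEquiv ^ (n i)) a) k : ℝ) : ℂ)) :=
        Finset.prod_congr rfl fun i _ => key i
    _ = Complex.exp (∑ i : Fin (t + 1), 2 * Real.pi * Complex.I * α *
          ((∑ k ∈ Finset.Icc 1 s, b i k * ((weylEquiv ^ (n i)) a) k : ℝ) : ℂ)) :=
        (Complex.exp_sum _ _).symm
    _ = 1 := by
        rw [← Finset.mul_sum]
        have : ∑ i : Fin (t + 1),
            ((∑ k ∈ Finset.Icc 1 s, b i k * ((weylEquiv ^ (n i)) a) k : ℝ) : ℂ) = 0 := by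
          rw [← Complex.ofReal_sum, hsum, Complex.ofReal_zero]
        rw [this, mul_zero, Complex.exp_zero]
end
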